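/- There exists a dimensional constant C = C(d) > 0 such that for any f ∈ C¹(ℝ^d) with |∇f| locally integrable and all x, y ∈ ℝ^d: |f(x) − f(y)| ≤ C |x−y| (M|∇f|(x) + M|∇f|(y)), where M g(x) := sup_{r>0} (1/|B_r|) ∫_{B_r} |g(x+z)| dz is the Hardy–Littlewood maximal function. -/

import Mathlib

open MeasureTheory Set
open scoped ENNReal NNReal

/-- The (uncentered, over balls centered at `x`) Hardy–Littlewood maximal function of `g`,
`M g(x) = sup_{r>0} (1/|B_r|) ∫_{B_r} |g(x+z)| dz`, valued in `ℝ≥0∞`. -/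
noncomputable def maximalFn (d : ℕ) (g : EuclideanSpace ℝ (Fin d) → ℝ)
    (x : EuclideanSpace ℝ (Fin d)) : ℝ≥0∞ :=
  ⨆ (r : ℝ) (_ : 0 < r),
    (∫⁻ z in Metric.closedBall (0 : EuclideanSpace ℝ (Fin d)) r,
        ENNReal.ofReal |g (x + z)| ∂volume)
      / volume (Metric.closedBall (0 : EuclideanSpace ℝ (Fin d)) r)

section Aux

variable {d : ℕ}
local notation "E" => EuclideanSpace ℝ (Fin d)

lemma my_ftc {f : E → ℝ} (hf : ContDiff ℝ 1 f) (p z : E) :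
    ENNReal.ofReal |f p - f z|
      ≤ ∫⁻ t in Ioc (0:ℝ) 1,
          ENNReal.ofReal ‖fderiv ℝ f (p + t • (z - p))‖ * ENNReal.ofReal ‖z - p‖ ∂volume := by
  have hdf : Continuous (fderiv ℝ f) := hf.continuous_fderiv one_ne_zero
  have hγ : Continuous fun t : ℝ => p + t • (z - p) := by
    exact continuous_const.add (continuous_id.smul continuous_const)
  have hc1 : Continuous fun t : ℝ => (fderiv ℝ f (p + t • (z - p))) (z - p) :=
    (hdf.comp hγ).clm_apply continuous_const
  have hc2 : Continuous fun t : ℝ => ‖fderiv ℝ f (p + t • (z - p))‖ * ‖z - p‖ :=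
    (hdf.comp hγ).norm.mul continuous_const
  have key : |f p - f z| ≤ ∫ t in (0:ℝ)..1, ‖fderiv ℝ f (p + t • (z - p))‖ * ‖z - p‖ := by
    have hderiv : ∀ t ∈ uIcc (0:ℝ) 1, HasDerivAt (fun s : ℝ => f (p + s • (z - p)))
        ((fderiv ℝ f (p + t • (z - p))) (z - p)) t := by
      intro t _
      have h1 : HasDerivAt (fun s : ℝ => p + s • (z - p)) (z - p) t := by
        simpa using ((hasDerivAt_id t).smul_const (z - p)).const_add p
      exact ((hf.differentiable one_ne_zero _).hasFDerivAt.comp_hasDerivAt t h1)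
    have hint : IntervalIntegrable (fun t : ℝ => (fderiv ℝ f (p + t • (z - p))) (z - p))
        volume 0 1 := hc1.intervalIntegrable _ _
    have heq := intervalIntegral.integral_eq_sub_of_hasDerivAt hderiv hint
    simp only [one_smul, zero_smul, add_zero, add_sub_cancel] at heq
    calc |f p - f z| = |∫ t in (0:ℝ)..1, (fderiv ℝ f (p + t • (z - p))) (z - p)| := by
          rw [heq, abs_sub_comm]
      _ ≤ ∫ t in (0:ℝ)..1, ‖(fderiv ℝ f (p + t • (z - p))) (z - p)‖ := by
          simpa using intervalIntegral.norm_integral_le_integral_norm (f := fun t : ℝ =>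
            (fderiv ℝ f (p + t • (z - p))) (z - p)) zero_le_one
      _ ≤ ∫ t in (0:ℝ)..1, ‖fderiv ℝ f (p + t • (z - p))‖ * ‖z - p‖ := by
          refine intervalIntegral.integral_mono_on zero_le_one
            (hc1.norm.intervalIntegrable _ _) (hc2.intervalIntegrable _ _) fun t _ => ?_
          exact ContinuousLinearMap.le_opNorm _ _
  have h2 : ENNReal.ofReal |f p - f z|
      ≤ ENNReal.ofReal (∫ t in Ioc (0:ℝ) 1, ‖fderiv ℝ f (p + t • (z - p))‖ * ‖z - p‖) := by
    apply ENNReal.ofReal_le_ofReal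
    rwa [intervalIntegral.integral_of_le zero_le_one] at key
  refine h2.trans_eq ?_
  rw [ofReal_integral_eq_lintegral_ofReal]
  · refine setLIntegral_congr_fun measurableSet_Ioc (fun t _ => ?_)
    exact ENNReal.ofReal_mul (norm_nonneg _)
  · exact hc2.integrableOn_Ioc.integrable
  · exact ae_of_all _ fun t => mul_nonneg (norm_nonneg _) (norm_nonneg _)

lemma my_max_bound (g : E → ℝ) (p : E) {s : ℝ} (hs : 0 < s) :
    ∫⁻ z in Metric.closedBall (0:E) s, ENNReal.ofReal |g (p + z)| ∂volume
      ≤ volume (Metric.closedBall (0:E) s) * maximalFn d g p := by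
  set V := volume (Metric.closedBall (0:E) s) with hV
  have hV0 : V ≠ 0 := (Metric.measure_closedBall_pos volume 0 hs).ne'
  have hVt : V ≠ ⊤ := measure_closedBall_lt_top.ne
  have h : (∫⁻ z in Metric.closedBall (0:E) s, ENNReal.ofReal |g (p + z)| ∂volume) / V
      ≤ maximalFn d g p :=
    le_iSup₂ (f := fun (r : ℝ) (_ : 0 < r) =>
      (∫⁻ z in Metric.closedBall (0:E) r, ENNReal.ofReal |g (p + z)| ∂volume)
        / volume (Metric.closedBall (0:E) r)) s hs
  calc (∫⁻ z in Metric.closedBall (0:E) s, ENNReal.ofReal |g (p + z)| ∂volume)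
      = (∫⁻ z in Metric.closedBall (0:E) s, ENNReal.ofReal |g (p + z)| ∂volume) / V * V :=
        (ENNReal.div_mul_cancel hV0 hVt).symm
    _ ≤ maximalFn d g p * V := mul_le_mul_left h V
    _ = V * maximalFn d g p := mul_comm _ _

lemma my_scale (H : E → ℝ≥0∞) (hH : Measurable H) (p m : E) {r t : ℝ}
    (ht : 0 < t) (hpm : dist p m ≤ r) :
    ∫⁻ z in Metric.closedBall m r, H (t • (z - p)) ∂volume
      ≤ (ENNReal.ofReal (t ^ d))⁻¹
          * ∫⁻ u in Metric.closedBall (0:E) (2 * t * r), H u ∂volume := by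
  set ψ : E → E := fun z => t • (z - p) with hψdef
  have hψm : Measurable ψ := ((measurable_id.sub measurable_const).const_smul t)
  have hsub : Metric.closedBall m r ⊆ ψ ⁻¹' (Metric.closedBall (0:E) (2 * t * r)) := by
    intro z hz
    have hzp : ‖z - p‖ ≤ 2 * r := by
      have h1 : dist z p ≤ dist z m + dist m p := dist_triangle z m p
      have h2 : dist z m ≤ r := Metric.mem_closedBall.1 hz
      have h3 : dist m p ≤ r := by rwa [dist_comm] at hpm
      rw [← dist_eq_norm]; linarith
    simp only [mem_preimage, Metric.mem_closedBall, dist_zero_right, hψdef, norm_smul,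
      Real.norm_eq_abs, abs_of_pos ht]
    calc t * ‖z - p‖ ≤ t * (2 * r) := by nlinarith [ht.le]
      _ = 2 * t * r := by ring
  have hmap : volume.map ψ = (ENNReal.ofReal (t ^ d))⁻¹ • (volume : Measure E) := by
    have h1 : ψ = (fun u : E => t • u) ∘ (fun z : E => z + (-p)) := by
      funext z; simp [hψdef, sub_eq_add_neg]
    rw [h1, ← Measure.map_map (measurable_const_smul t) (measurable_add_const (-p)),
      map_add_right_eq_self, Measure.map_addHaar_smul volume ht.ne']
    congr 1
    rw [finrank_euclideanSpace_fin, abs_of_nonneg (inv_nonneg.2 (pow_nonneg ht.le d)),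
      ENNReal.ofReal_inv_of_pos (pow_pos ht d)]
  calc ∫⁻ z in Metric.closedBall m r, H (ψ z) ∂volume
      ≤ ∫⁻ z in ψ ⁻¹' (Metric.closedBall (0:E) (2 * t * r)), H (ψ z) ∂volume :=
        lintegral_mono_set hsub
    _ = ∫⁻ u in Metric.closedBall (0:E) (2 * t * r), H u ∂(volume.map ψ) :=
        (setLIntegral_map measurableSet_closedBall hH hψm).symm
    _ = (ENNReal.ofReal (t ^ d))⁻¹
          * ∫⁻ u in Metric.closedBall (0:E) (2 * t * r), H u ∂volume := by
        rw [hmap, Measure.restrict_smul, lintegral_smul_measure, smul_eq_mul]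

lemma my_core {f : E → ℝ} (hf : ContDiff ℝ 1 f) {r : ℝ} (hr : 0 < r) (p m : E)
    (hpm : dist p m ≤ r) :
    ∫⁻ z in Metric.closedBall m r, ENNReal.ofReal |f p - f z| ∂volume
      ≤ ENNReal.ofReal (2 * r * 2 ^ d) * volume (Metric.closedBall (0:E) r)
          * maximalFn d (fun z => ‖fderiv ℝ f z‖) p := by
  have hdf : Continuous (fderiv ℝ f) := hf.continuous_fderiv one_ne_zero
  set M := maximalFn d (fun z => ‖fderiv ℝ f z‖) p with hM
  set V := volume (Metric.closedBall (0:E) r) with hV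
  set H : E → ℝ≥0∞ := fun u => ENNReal.ofReal ‖fderiv ℝ f (p + u)‖ with hHdef
  have hHm : Measurable H :=
    (ENNReal.continuous_ofReal.comp ((hdf.comp (continuous_const.add continuous_id)).norm)).measurable
  set F : E → ℝ → ℝ≥0∞ := fun z t => H (t • (z - p)) * ENNReal.ofReal (2 * r) with hFdef
  have hFc : Measurable fun q : E × ℝ => F q.1 q.2 := by
    apply Measurable.mul (f := fun q : E × ℝ => H (q.2 • (q.1 - p)))
      (g := fun _ => ENNReal.ofReal (2 * r)) _ measurable_const
    apply (ENNReal.continuous_ofReal.comp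
      (hdf.comp (continuous_const.add ((continuous_snd.smul
      (continuous_fst.sub continuous_const))))).norm).measurable
  set K : ℝ≥0∞ := ENNReal.ofReal (2 * r * 2 ^ d) * V * M with hK
  have hKfin : ∀ t ∈ Ioc (0:ℝ) 1,
      (∫⁻ z in Metric.closedBall m r, F z t ∂volume) ≤ K := by
    intro t ht
    obtain ⟨ht0, ht1⟩ := ht
    have hψm : Measurable fun z : E => t • (z - p) :=
      (measurable_id.sub measurable_const).const_smul t
    have hvol : volume (Metric.closedBall (0:E) (2 * t * r))
        = ENNReal.ofReal ((2 * t) ^ d) * V := by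
      have h := Measure.addHaar_closedBall_mul (volume : Measure (EuclideanSpace ℝ (Fin d)))
        (0 : EuclideanSpace ℝ (Fin d)) (by linarith : (0:ℝ) ≤ 2 * t) hr.le
      rwa [finrank_euclideanSpace_fin] at h
    have hmaxb : (∫⁻ u in Metric.closedBall (0:E) (2 * t * r), H u ∂volume)
        ≤ volume (Metric.closedBall (0:E) (2 * t * r)) * M := by
      have := my_max_bound (fun z => ‖fderiv ℝ f z‖) p
        (show 0 < 2 * t * r by positivity)
      simpa [hHdef, abs_norm, hM] using this
    have hcancel : (ENNReal.ofReal (t ^ d))⁻¹ * ENNReal.ofReal (t ^ d) = 1 :=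
      ENNReal.inv_mul_cancel (by simp [ENNReal.ofReal_eq_zero, not_le, pow_pos ht0])
        ENNReal.ofReal_ne_top
    calc (∫⁻ z in Metric.closedBall m r, F z t ∂volume)
        = (∫⁻ z in Metric.closedBall m r, H (t • (z - p)) ∂volume)
            * ENNReal.ofReal (2 * r) := lintegral_mul_const _ (hHm.comp hψm)
      _ ≤ ((ENNReal.ofReal (t ^ d))⁻¹
            * ∫⁻ u in Metric.closedBall (0:E) (2 * t * r), H u ∂volume)
            * ENNReal.ofReal (2 * r) :=
          mul_le_mul_left (my_scale (r := r) (t := t) H hHm p m ht0 hpm) _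
      _ ≤ ((ENNReal.ofReal (t ^ d))⁻¹
            * (volume (Metric.closedBall (0:E) (2 * t * r)) * M))
            * ENNReal.ofReal (2 * r) := by gcongr
      _ = K := by
          have h2t : ENNReal.ofReal ((2 * t) ^ d)
              = ENNReal.ofReal ((2:ℝ) ^ d) * ENNReal.ofReal (t ^ d) := by
            rw [← ENNReal.ofReal_mul (by positivity)]; congr 1; ring
          have hsplit : ENNReal.ofReal (2 * r * 2 ^ d)
              = ENNReal.ofReal ((2:ℝ) ^ d) * ENNReal.ofReal (2 * r) := by
            rw [← ENNReal.ofReal_mul (by positivity)]; congr 1; ring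
          rw [hvol, h2t, hK, hsplit,
            show ((ENNReal.ofReal (t ^ d))⁻¹ *
              (ENNReal.ofReal ((2:ℝ) ^ d) * ENNReal.ofReal (t ^ d) * V * M))
              * ENNReal.ofReal (2 * r)
            = ((ENNReal.ofReal (t ^ d))⁻¹ * ENNReal.ofReal (t ^ d)) *
              (ENNReal.ofReal ((2:ℝ) ^ d) * ENNReal.ofReal (2 * r) * V * M) by ring,
            hcancel, one_mul]
  have hmeas : Measurable fun z : E => ∫⁻ t in Ioc (0:ℝ) 1, F z t ∂volume :=
    Measurable.lintegral_prod_right (f := F) hFc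
  calc ∫⁻ z in Metric.closedBall m r, ENNReal.ofReal |f p - f z| ∂volume
      ≤ ∫⁻ z in Metric.closedBall m r, ∫⁻ t in Ioc (0:ℝ) 1, F z t ∂volume ∂volume := by
        refine setLIntegral_mono hmeas fun z hz => ?_
        refine (my_ftc hf p z).trans ?_
        refine setLIntegral_mono ((hHm.comp ((measurable_id.smul
          measurable_const))).mul measurable_const) fun t _ => ?_
        refine mul_le_mul_right (ENNReal.ofReal_le_ofReal ?_) _
        have h1 : dist z p ≤ dist z m + dist m p := dist_triangle z m p
        have h2 : dist z m ≤ r := Metric.mem_closedBall.1 hz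
        have h3 : dist m p ≤ r := by rwa [dist_comm] at hpm
        rw [← dist_eq_norm]; linarith
    _ = ∫⁻ t in Ioc (0:ℝ) 1, ∫⁻ z in Metric.closedBall m r, F z t ∂volume ∂volume :=
        lintegral_lintegral_swap hFc.aemeasurable
    _ ≤ ∫⁻ _ in Ioc (0:ℝ) 1, K ∂volume := setLIntegral_mono measurable_const hKfin
    _ = K := by rw [setLIntegral_const, Real.volume_Ioc]; norm_num

end Aux

/-- Lemma 2.1(i): there is `C = C(d) > 0` such that for every `f ∈ C¹(ℝ^d)` with
locally integrable gradient and all `x, y`,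
`|f(x) − f(y)| ≤ C |x−y| (M|∇f|(x) + M|∇f|(y))`. -/
theorem stmt12 (d : ℕ) :
    ∃ C > (0:ℝ), ∀ f : EuclideanSpace ℝ (Fin d) → ℝ, ContDiff ℝ 1 f →
      LocallyIntegrable (fun x => ‖fderiv ℝ f x‖) volume →
      ∀ x y : EuclideanSpace ℝ (Fin d),
        ENNReal.ofReal |f x - f y|
          ≤ ENNReal.ofReal (C * ‖x - y‖) *
              (maximalFn d (fun z => ‖fderiv ℝ f z‖) x
                + maximalFn d (fun z => ‖fderiv ℝ f z‖) y) := by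
  refine ⟨2 ^ (d + 1), by positivity, ?_⟩
  intro f hf _ x y
  rcases eq_or_ne x y with rfl | hxy
  · simp
  set g : EuclideanSpace ℝ (Fin d) → ℝ := fun z => ‖fderiv ℝ f z‖ with hg
  set r : ℝ := ‖x - y‖ with hrdef
  have hr : 0 < r := norm_pos_iff.2 (sub_ne_zero.2 hxy)
  set m : EuclideanSpace ℝ (Fin d) := midpoint ℝ x y with hm
  have hdxy : dist x y = r := by rw [dist_eq_norm, hrdef]
  have hxm : dist x m ≤ r := by
    rw [hm, dist_left_midpoint, hdxy]
    rw [show ‖(2:ℝ)‖ = 2 by simp]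
    nlinarith
  have hym : dist y m ≤ r := by
    rw [hm, dist_comm, dist_midpoint_right, hdxy]
    rw [show ‖(2:ℝ)‖ = 2 by simp]
    nlinarith
  set V := volume (Metric.closedBall (0 : EuclideanSpace ℝ (Fin d)) r) with hV
  have hV0 : V ≠ 0 := (Metric.measure_closedBall_pos volume 0 hr).ne'
  have hVt : V ≠ ⊤ := measure_closedBall_lt_top.ne
  have hVm : volume (Metric.closedBall m r) = V := Measure.addHaar_closedBall_center volume m r
  set Mx := maximalFn d g x with hMx
  set My := maximalFn d g y with hMy
  have hfc : Continuous f := hf.continuous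
  have key : V * ENNReal.ofReal |f x - f y|
      ≤ V * (ENNReal.ofReal (2 * r * 2 ^ d) * (Mx + My)) := by
    calc V * ENNReal.ofReal |f x - f y|
        = ∫⁻ _ in Metric.closedBall m r, ENNReal.ofReal |f x - f y| ∂volume := by
          rw [setLIntegral_const, hVm, mul_comm]
      _ ≤ ∫⁻ z in Metric.closedBall m r,
            (ENNReal.ofReal |f x - f z| + ENNReal.ofReal |f z - f y|) ∂volume := by
          refine lintegral_mono fun z => ?_
          exact le_trans (ENNReal.ofReal_le_ofReal (abs_sub_le (f x) (f z) (f y)))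
            ENNReal.ofReal_add_le
      _ = (∫⁻ z in Metric.closedBall m r, ENNReal.ofReal |f x - f z| ∂volume)
          + ∫⁻ z in Metric.closedBall m r, ENNReal.ofReal |f z - f y| ∂volume := by
          exact lintegral_add_left
            (ENNReal.continuous_ofReal.comp ((continuous_const.sub hfc).abs)).measurable _
      _ ≤ (ENNReal.ofReal (2 * r * 2 ^ d) * V * Mx)
          + (ENNReal.ofReal (2 * r * 2 ^ d) * V * My) := by
          refine add_le_add (my_core hf hr x m hxm) ?_
          have habs : ∀ z : EuclideanSpace ℝ (Fin d),
              ENNReal.ofReal |f z - f y| = ENNReal.ofReal |f y - f z| := fun z => by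
            rw [abs_sub_comm]
          simp_rw [habs]
          exact my_core hf hr y m hym
      _ = V * (ENNReal.ofReal (2 * r * 2 ^ d) * (Mx + My)) := by ring
  have key2 := (ENNReal.mul_le_mul_iff_right hV0 hVt).1 key
  refine key2.trans_eq ?_
  rw [show (2:ℝ) * r * 2 ^ d = 2 ^ (d + 1) * ‖x - y‖ by rw [← hrdef]; ring]
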